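/- arXiv:2408.07200 — 2 statements merged into one kernel-verified Lean document; each statement's English description precedes it below -/
import Mathlib

section
/- Let n be an odd positive integer, let S ⊆ ℤ_n \ {0} satisfy S = −S, and let A be the adjacency matrix of the circulant graph G(ℤ_n, S) (indexed by ℤ_n). Then for every x ∈ ℤ_n \ {0}, x ∈ S if and only if the entry (A²)_{0, 2x} is odd. Consequently, S = { x : 2x = j in ℤ_n and (A²)_{0,j} is odd }, so the graph G(ℤ_n, S) is determined by A². -/
/-- Adjacency matrix (with natural number entries) of the circulant graph `G(ℤ_n, S)`. -/
def circAdjNat (n : ℕ) (S : Finset (ZMod n)) : Matrix (ZMod n) (ZMod n) ℕ :=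
  fun i j => if j - i ∈ S then 1 else 0

theorem stmt18 (n : ℕ) [NeZero n] (hodd : Odd n)
    (S : Finset (ZMod n)) (hsym : ∀ x : ZMod n, x ∈ S ↔ -x ∈ S)
    (h0 : (0 : ZMod n) ∉ S)
    (A : Matrix (ZMod n) (ZMod n) ℕ) (hA : A = circAdjNat n S) :
    (∀ x : ZMod n, x ≠ 0 → (x ∈ S ↔ Odd ((A * A) 0 (2 * x)))) ∧
      S = Finset.univ.filter (fun x : ZMod n => Odd ((A * A) 0 (2 * x))) := by
  subst hA
  have h2 : IsUnit (2 : ZMod n) := by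
    have hc : Nat.Coprime 2 n := Nat.coprime_two_left.mpr hodd
    have := (ZMod.isUnit_iff_coprime 2 n).mpr hc
    simpa using this
  have hcancel : ∀ k x : ZMod n, 2 * x - k = k → k = x := by
    intro k x h
    have h' : 2 * k = 2 * x := by linear_combination -h
    exact h2.mul_left_cancel h'
  have key : ∀ x : ZMod n,
      (((circAdjNat n S * circAdjNat n S) 0 (2 * x) : ℕ) : ZMod 2)
        = if x ∈ S then 1 else 0 := by
    intro x
    have expand : (circAdjNat n S * circAdjNat n S) 0 (2 * x)
        = ∑ k : ZMod n, (if k ∈ S then 1 else 0) * (if 2 * x - k ∈ S then 1 else 0) := by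
      rw [Matrix.mul_apply]
      congr 1; funext k
      simp [circAdjNat, sub_zero]
    rw [expand, Nat.cast_sum]
    rw [← Finset.add_sum_erase _ _ (Finset.mem_univ x)]
    have hzero : ∑ k ∈ Finset.univ.erase x,
        (((if k ∈ S then 1 else 0) * (if 2 * x - k ∈ S then 1 else 0) : ℕ) : ZMod 2) = 0 := by
      apply Finset.sum_involution (fun k _ => 2 * x - k)
      · intro k _
        have hsymm : (((if 2 * x - k ∈ S then 1 else 0) *
              (if 2 * x - (2 * x - k) ∈ S then 1 else 0) : ℕ) : ZMod 2)
            = (((if k ∈ S then 1 else 0) * (if 2 * x - k ∈ S then 1 else 0) : ℕ) : ZMod 2) := by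
          rw [show 2 * x - (2 * x - k) = k by ring, Nat.mul_comm]
        rw [hsymm, ← two_mul]
        exact mul_eq_zero_of_left (by decide) _
      · intro k hk _ hcontra
        exact (Finset.mem_erase.mp hk).1 (hcancel k x hcontra)
      · intro k hk
        refine Finset.mem_erase.mpr ⟨?_, Finset.mem_univ _⟩
        intro hcontra
        exact (Finset.mem_erase.mp hk).1 (by linear_combination -hcontra)
      · intro k _; ring
    rw [hzero, add_zero, show 2 * x - x = x by ring]
    by_cases hx : x ∈ S <;> simp [hx]
  have main : ∀ x : ZMod n, x ∈ S ↔ Odd ((circAdjNat n S * circAdjNat n S) 0 (2 * x)) := by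
    intro x
    rw [← ZMod.natCast_eq_one_iff_odd, key x]
    by_cases hx : x ∈ S <;> simp [hx]
  refine ⟨fun x _ => main x, ?_⟩
  ext x
  simp only [Finset.mem_filter, Finset.mem_univ, true_and]
  exact main x
end

section
/- Let p be an odd prime and let F and H be circulant graphs on p vertices, i.e., F = G(ℤ_p, S_F) and H = G(ℤ_p, S_H) for sets S_F, S_H ⊆ ℤ_p \ {0} closed under additive inverses. If F and H are singularly cospectral (the multisets of absolute values of the nonzero eigenvalues, with multiplicity, of their adjacency matrices coincide), then F and H are isomorphic as graphs. -/
open Polynomial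

/-- Adjacency matrix (over ℝ) of the circulant graph `G(ℤ_n, S)`. -/
noncomputable def circAdj (n : ℕ) (S : Finset (ZMod n)) : Matrix (ZMod n) (ZMod n) ℝ :=
  fun i j => if j - i ∈ S then 1 else 0

/-- Multiset of eigenvalues (with multiplicity) of the circulant graph `G(ℤ_n, S)`. -/
noncomputable def circSpectrum (n : ℕ) [NeZero n] (S : Finset (ZMod n)) : Multiset ℝ :=
  (Matrix.charpoly (circAdj n S)).roots

/-- Multiset of absolute values of the nonzero eigenvalues. -/
noncomputable def absNonzeroSpectrum (n : ℕ) [NeZero n] (S : Finset (ZMod n)) : Multiset ℝ :=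
  ((circSpectrum n S).filter (fun x => x ≠ 0)).map (fun x => |x|)

/-- The circulant graph `G(ℤ_n, S)`, for `S ⊆ ℤ_n \ {0}` with `S = -S`. -/
def circGraph (n : ℕ) (S : Finset (ZMod n)) (hsym : ∀ x : ZMod n, x ∈ S ↔ -x ∈ S)
    (h0 : (0 : ZMod n) ∉ S) : SimpleGraph (ZMod n) where
  Adj i j := j - i ∈ S
  symm := by
    constructor
    intro i j hij
    have := (hsym (j - i)).mp hij
    simpa [neg_sub] using this
  loopless := by
    constructor
    intro i hi
    exact h0 (by simpa using hi)

variable (p : ℕ) [NeZero p]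

noncomputable def zeta : ℂ := Complex.exp (2 * Real.pi * Complex.I / p)

lemma zeta_prim : IsPrimitiveRoot (zeta p) p :=
  Complex.isPrimitiveRoot_exp p (NeZero.ne p)

noncomputable def chi (a : ZMod p) : ℂ := zeta p ^ a.val

lemma chi_pow_nat (n : ℕ) : chi p (n : ZMod p) = zeta p ^ n := by
  have h1 : (zeta p) ^ p = 1 := (zeta_prim p).pow_eq_one
  rw [chi, ZMod.val_natCast]
  conv_rhs => rw [← Nat.div_add_mod n p]
  rw [pow_add, pow_mul, h1, one_pow, one_mul]

lemma chi_add (a b : ZMod p) : chi p (a + b) = chi p a * chi p b := by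
  have := chi_pow_nat p (a.val + b.val)
  rw [Nat.cast_add, ZMod.natCast_val, ZMod.natCast_val, ZMod.cast_id, ZMod.cast_id, pow_add] at this
  exact this

lemma chi_zero : chi p 0 = 1 := by simp [chi]

lemma chi_ne_zero (a : ZMod p) : chi p a ≠ 0 := pow_ne_zero _ ((zeta_prim p).ne_zero (NeZero.ne p))

lemma chi_neg (a : ZMod p) : chi p (-a) = (chi p a)⁻¹ := by
  have h := chi_add p a (-a)
  rw [add_neg_cancel, chi_zero] at h
  exact (inv_eq_of_mul_eq_one_right h.symm).symm

lemma conj_zeta : (starRingEnd ℂ) (zeta p) = (zeta p)⁻¹ := by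
  rw [zeta, ← Complex.exp_conj, ← Complex.exp_neg]
  congr 1
  have h2 : (starRingEnd ℂ) 2 = 2 := map_ofNat _ 2
  simp [map_div₀, Complex.conj_I, Complex.conj_ofReal, h2]
  ring

lemma chi_conj (a : ZMod p) : (starRingEnd ℂ) (chi p a) = chi p (-a) := by
  rw [chi_neg]
  simp only [chi, map_pow, conj_zeta, inv_pow]

lemma chi_mul_val (a c : ZMod p) : chi p (a * c) = chi p c ^ a.val := by
  have h1 : a * c = ((a.val * c.val : ℕ) : ZMod p) := by
    push_cast [ZMod.natCast_val, ZMod.cast_id]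
    ring
  rw [h1, chi_pow_nat, chi, ← pow_mul, mul_comm]

lemma chi_eq_one_iff (c : ZMod p) : chi p c = 1 ↔ c = 0 := by
  rw [chi]
  constructor
  · intro h
    have hd := ((zeta_prim p).pow_eq_one_iff_dvd c.val).mp h
    exact (ZMod.val_eq_zero c).mp (Nat.eq_zero_of_dvd_of_lt hd (ZMod.val_lt c))
  · intro h; simp [h, ZMod.val_zero]

lemma chi_pow_p (c : ZMod p) : chi p c ^ p = 1 := by
  rw [chi, ← pow_mul, mul_comm, pow_mul, (zeta_prim p).pow_eq_one, one_pow]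

lemma sum_chi (c : ZMod p) : ∑ a : ZMod p, chi p (a * c) = if c = 0 then (p : ℂ) else 0 := by
  split_ifs with hc
  · simp [hc, chi_zero, Finset.card_univ]
  · have hw : chi p c ≠ 1 := fun h => hc ((chi_eq_one_iff p c).mp h)
    have e : ∑ a : ZMod p, chi p (a * c) = ∑ k ∈ Finset.range p, (chi p c) ^ k := by
      simp_rw [chi_mul_val]
      refine Finset.sum_nbij' (fun a => a.val) (fun k => (k : ZMod p)) ?_ ?_ ?_ ?_ ?_
      · intro a _; exact Finset.mem_range.mpr (ZMod.val_lt a)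
      · intro k _; exact Finset.mem_univ _
      · intro a _; exact ZMod.natCast_rightInverse a
      · intro k hk; exact ZMod.val_cast_of_lt (Finset.mem_range.mp hk)
      · intro a _; rfl
    rw [e, geom_sum_eq hw, chi_pow_p, sub_self, zero_div]
section Conj
open Matrix Polynomial
variable {n : Type*} [DecidableEq n] [Fintype n] {R : Type*} [CommRing R]

lemma charpoly_conj_explicit (W A V : Matrix n n R) (hWV : W * V = 1) (hVW : V * W = 1) :
    (W * A * V).charpoly = A.charpoly := by
  classical
  set f : Matrix n n R →+* Matrix n n R[X] := (RingHom.mapMatrix (C : R →+* R[X])) with hf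
  have hWV' : f W * f V = 1 := by rw [← _root_.map_mul, hWV, _root_.map_one]
  have key : charmatrix (W * A * V) = f W * charmatrix A * f V := by
    have hs : Matrix.scalar n (X : R[X]) = (X : R[X]) • (1 : Matrix n n R[X]) := by
      ext i j
      simp only [Matrix.scalar_apply, Matrix.smul_apply, Matrix.one_apply, Matrix.diagonal_apply]
      split_ifs <;> simp
    rw [charmatrix, charmatrix, mul_sub, sub_mul]
    congr 1
    · rw [hs, mul_smul_comm, smul_mul_assoc, mul_one, hWV']
    · show _ = f W * f A * f V
      rw [← _root_.map_mul, ← _root_.map_mul]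
  rw [Matrix.charpoly, key, det_mul, det_mul, Matrix.charpoly]
  have h1 : (f W).det * (f V).det = 1 := by rw [← det_mul, hWV', det_one]
  calc (f W).det * (charmatrix A).det * (f V).det
      = (f W).det * (f V).det * (charmatrix A).det := by ring
    _ = (charmatrix A).det := by rw [h1, one_mul]

lemma charpoly_diagonal (d : n → R) :
    (Matrix.diagonal d).charpoly = ∏ i, (X - C (d i)) := by
  classical
  rw [Matrix.charpoly]
  have : charmatrix (Matrix.diagonal d) = Matrix.diagonal (fun i => X - C (d i)) := by
    ext i j
    by_cases h : i = j <;> simp [h, charmatrix_apply, Matrix.diagonal_apply]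
  rw [this, det_diagonal]
end Conj

section Circ
open Matrix
variable (p : ℕ) [NeZero p]

noncomputable def lam (S : Finset (ZMod p)) (b : ZMod p) : ℂ := ∑ s ∈ S, chi p (b * s)

noncomputable def Wm : Matrix (ZMod p) (ZMod p) ℂ := fun a b => chi p (a * b)

noncomputable def Vm : Matrix (ZMod p) (ZMod p) ℂ := fun a b => (p : ℂ)⁻¹ * chi p (-(a * b))

lemma pC_ne_zero : (p : ℂ) ≠ 0 := by
  exact_mod_cast Nat.cast_ne_zero.mpr (NeZero.ne p)

lemma Wm_mul_Vm : Wm p * Vm p = 1 := by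
  ext a c
  simp only [Matrix.mul_apply, Wm, Vm, Matrix.one_apply]
  have h : ∀ b : ZMod p, chi p (a * b) * ((p : ℂ)⁻¹ * chi p (-(b * c)))
      = (p : ℂ)⁻¹ * chi p (b * (a - c)) := by
    intro b
    rw [mul_left_comm, ← chi_add]
    congr 2
    ring
  rw [Finset.sum_congr rfl (fun b _ => h b), ← Finset.mul_sum, sum_chi]
  rcases eq_or_ne a c with rfl | hne
  · simp [pC_ne_zero p, sub_self]
  · have : a - c ≠ 0 := sub_ne_zero.mpr hne
    simp [this, hne]

lemma Vm_mul_Wm : Vm p * Wm p = 1 := by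
  ext a c
  simp only [Matrix.mul_apply, Wm, Vm, Matrix.one_apply]
  have h : ∀ b : ZMod p, (p : ℂ)⁻¹ * chi p (-(a * b)) * chi p (b * c)
      = (p : ℂ)⁻¹ * chi p (b * (c - a)) := by
    intro b
    rw [mul_assoc, ← chi_add]
    congr 2
    ring
  rw [Finset.sum_congr rfl (fun b _ => h b), ← Finset.mul_sum, sum_chi]
  rcases eq_or_ne a c with rfl | hne
  · simp [pC_ne_zero p, sub_self]
  · have : c - a ≠ 0 := sub_ne_zero.mpr (Ne.symm hne)
    simp [this, hne]

lemma circ_mul_Wm (S : Finset (ZMod p)) :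
    (circAdj p S).map (algebraMap ℝ ℂ) * Wm p = Wm p * Matrix.diagonal (lam p S) := by
  ext i b
  rw [Matrix.mul_diagonal]
  simp only [Matrix.mul_apply, Wm, circAdj, Matrix.map_apply]
  have h : ∀ j : ZMod p, (algebraMap ℝ ℂ) (if j - i ∈ S then (1:ℝ) else 0) * chi p (j * b)
      = if j - i ∈ S then chi p (j * b) else 0 := by
    intro j; split_ifs <;> simp
  rw [Finset.sum_congr rfl (fun j _ => h j), ← Finset.sum_filter]
  rw [show (Finset.univ.filter (fun j => j - i ∈ S)) = S.image (fun s => i + s) by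
    ext j
    simp only [Finset.mem_filter, Finset.mem_univ, true_and, Finset.mem_image]
    constructor
    · intro hj; exact ⟨j - i, hj, by ring⟩
    · rintro ⟨s, hs, rfl⟩; simpa using hs]
  rw [Finset.sum_image (by intro x _ y _ h; simpa using h)]
  have h2 : ∀ s ∈ S, chi p ((i + s) * b) = chi p (i * b) * chi p (b * s) := by
    intro s _
    rw [← chi_add]
    congr 1
    ring
  rw [Finset.sum_congr rfl h2, ← Finset.mul_sum, lam]

lemma charpoly_circ_complex (S : Finset (ZMod p)) :
    ((circAdj p S).map (algebraMap ℝ ℂ)).charpoly = ∏ b : ZMod p, (X - C (lam p S b)) := by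
  have hM : (circAdj p S).map (algebraMap ℝ ℂ)
      = Wm p * Matrix.diagonal (lam p S) * Vm p := by
    calc (circAdj p S).map (algebraMap ℝ ℂ)
        = (circAdj p S).map (algebraMap ℝ ℂ) * (Wm p * Vm p) := by rw [Wm_mul_Vm, mul_one]
      _ = ((circAdj p S).map (algebraMap ℝ ℂ) * Wm p) * Vm p := by rw [mul_assoc]
      _ = Wm p * Matrix.diagonal (lam p S) * Vm p := by rw [circ_mul_Wm]
  rw [hM, charpoly_conj_explicit _ _ _ (Wm_mul_Vm p) (Vm_mul_Wm p), _root_.charpoly_diagonal]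
end Circ

section Real
open Matrix
variable (p : ℕ) [NeZero p]

noncomputable def lamR (S : Finset (ZMod p)) (b : ZMod p) : ℝ := (lam p S b).re

lemma lam_real (S : Finset (ZMod p)) (hsym : ∀ x : ZMod p, x ∈ S ↔ -x ∈ S) (b : ZMod p) :
    ((lamR p S b : ℝ) : ℂ) = lam p S b := by
  have hconj : (starRingEnd ℂ) (lam p S b) = lam p S b := by
    rw [lam, map_sum]
    rw [show ∑ s ∈ S, (starRingEnd ℂ) (chi p (b * s)) = ∑ s ∈ S, chi p (b * (-s)) by
      refine Finset.sum_congr rfl fun s _ => ?_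
      rw [chi_conj]; congr 1; ring]
    refine Finset.sum_nbij' (fun s => -s) (fun s => -s) ?_ ?_ ?_ ?_ ?_
    · intro s hs; exact (hsym s).mp hs
    · intro s hs; exact (hsym s).mp hs
    · intro s _; simp
    · intro s _; simp
    · intro s _; simp
  show ((lam p S b).re : ℂ) = lam p S b
  exact (Complex.conj_eq_iff_re.mp hconj)

lemma charpoly_circ (S : Finset (ZMod p)) (hsym : ∀ x : ZMod p, x ∈ S ↔ -x ∈ S) :
    (circAdj p S).charpoly = ∏ b : ZMod p, (X - C (lamR p S b)) := by
  apply Polynomial.map_injective (algebraMap ℝ ℂ) (by exact_mod_cast Complex.ofReal_injective)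
  rw [← Matrix.charpoly_map, charpoly_circ_complex, Polynomial.map_prod]
  refine Finset.prod_congr rfl fun b _ => ?_
  rw [Polynomial.map_sub, Polynomial.map_X, Polynomial.map_C]
  rw [show (algebraMap ℝ ℂ) (lamR p S b) = ((lamR p S b : ℝ) : ℂ) from rfl, lam_real p S hsym b]

lemma circSpectrum_eq (S : Finset (ZMod p)) (hsym : ∀ x : ZMod p, x ∈ S ↔ -x ∈ S) :
    (Matrix.charpoly (circAdj p S)).roots = Finset.univ.val.map (lamR p S) := by
  rw [charpoly_circ p S hsym]
  have : ∏ b : ZMod p, (X - C (lamR p S b))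
      = ((Finset.univ.val.map (lamR p S)).map (fun a => X - C a)).prod := by
    rw [Multiset.map_map]
    rfl
  rw [this, Polynomial.roots_multiset_prod_X_sub_C]
end Real

section Indep
open Polynomial
variable (p : ℕ) [NeZero p]

lemma indep (hp : p.Prime) (f : ZMod p → ℤ) (h0 : f 0 = 0)
    (hsum : ∑ j : ZMod p, (f j : ℂ) * chi p j = 0) : ∀ j, f j = 0 := by
  set g : ℚ[X] := ∑ j : ZMod p, Polynomial.C ((f j : ℚ)) * X ^ (j.val) with hg
  have hcoeff : ∀ k : ZMod p, g.coeff k.val = (f k : ℚ) := by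
    intro k
    rw [hg, Polynomial.finset_sum_coeff]
    rw [Finset.sum_eq_single k]
    · simp
    · intro j _ hjk
      rw [Polynomial.coeff_C_mul, Polynomial.coeff_X_pow]
      have : ¬ (k.val = j.val) := fun h => hjk (ZMod.val_injective p h.symm)
      simp [this]
    · intro h; exact absurd (Finset.mem_univ k) h
  have hgz : g = 0 := by
    by_contra hgne
    have haev : Polynomial.aeval (zeta p) g = 0 := by
      rw [hg, map_sum]
      rw [← hsum]
      refine Finset.sum_congr rfl fun j _ => ?_
      simp only [map_mul, map_pow, Polynomial.aeval_C, Polynomial.aeval_X]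
      push_cast
      rfl
    have hdvd : minpoly ℚ (zeta p) ∣ g := minpoly.dvd ℚ (zeta p) haev
    rw [← Polynomial.cyclotomic_eq_minpoly_rat (zeta_prim p) (NeZero.pos p)] at hdvd
    have hdegg : g.natDegree ≤ p - 1 := by
      refine Polynomial.natDegree_sum_le_of_forall_le _ _ fun j _ => ?_
      refine le_trans (Polynomial.natDegree_C_mul_le _ _) ?_
      rw [Polynomial.natDegree_X_pow]
      have := ZMod.val_lt j
      omega
    have hdegc : (Polynomial.cyclotomic p ℚ).natDegree = p - 1 := by
      rw [Polynomial.natDegree_cyclotomic, Nat.totient_prime hp]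
    obtain ⟨q, hq⟩ := hdvd
    have hqne : q ≠ 0 := fun h => hgne (by rw [hq, h, mul_zero])
    have hcyne : Polynomial.cyclotomic p ℚ ≠ 0 := Polynomial.cyclotomic_ne_zero p ℚ
    have hdeg2 : g.natDegree = (Polynomial.cyclotomic p ℚ).natDegree + q.natDegree := by
      rw [hq, Polynomial.natDegree_mul hcyne hqne]
    have hqdeg : q.natDegree = 0 := by omega
    obtain ⟨c, rfl⟩ := Polynomial.natDegree_eq_zero.mp hqdeg
    have hc0 : g.coeff 0 = c := by
      rw [hq, Polynomial.mul_coeff_zero, Polynomial.coeff_C_zero,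
        Polynomial.cyclotomic_coeff_zero ℚ hp.one_lt, one_mul]
    have hg0 : g.coeff 0 = 0 := by
      have := hcoeff 0
      rw [ZMod.val_zero] at this
      rw [this, h0]
      norm_num
    rw [hg0] at hc0
    rw [← hc0] at hq
    rw [map_zero, mul_zero] at hq
    exact hgne hq
  intro j
  have h := hcoeff j
  rw [hgz, Polynomial.coeff_zero] at h
  exact_mod_cast h.symm
end Indep

section Arith
variable (p : ℕ) [NeZero p]

lemma lam_zero (S : Finset (ZMod p)) : lam p S 0 = (S.card : ℂ) := by
  rw [lam]
  rw [Finset.sum_congr rfl (fun s _ => by rw [zero_mul, chi_zero])]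
  simp

lemma card_ge_two (hp : p.Prime) (hodd : Odd p) (S : Finset (ZMod p))
    (hsym : ∀ x : ZMod p, x ∈ S ↔ -x ∈ S) (h0 : (0 : ZMod p) ∉ S) (hS : S.Nonempty) :
    2 ≤ S.card := by
  obtain ⟨s, hs⟩ := hS
  refine Finset.one_lt_card.mpr ⟨s, hs, -s, (hsym s).mp hs, ?_⟩
  intro h
  have hss : s + s = 0 := by
    nth_rewrite 2 [h]
    exact add_neg_cancel s
  have h2 : (2 : ZMod p) * s = 0 := by rw [two_mul]; exact hss
  have h2ne : (2 : ZMod p) ≠ 0 := by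
    intro hc
    have hc' : ((2 : ℕ) : ZMod p) = 0 := by exact_mod_cast hc
    have hdvd := (ZMod.natCast_eq_zero_iff 2 p).mp hc'
    have hp2 : p = 2 := (Nat.prime_dvd_prime_iff_eq hp Nat.prime_two).mp hdvd
    rw [hp2] at hodd
    exact (Nat.not_odd_iff_even.mpr (by norm_num)) hodd
  haveI : Fact p.Prime := ⟨hp⟩
  rcases mul_eq_zero.mp h2 with h' | h'
  · exact h2ne h'
  · rw [h'] at hs; exact h0 hs

lemma lam_eq_sum_image (hp : p.Prime) (S : Finset (ZMod p)) (a : ZMod p) (ha : a ≠ 0) :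
    lam p S a = ∑ j ∈ S.image (fun s => a * s), chi p j := by
  rw [lam, Finset.sum_image]
  intro x _ y _ h
  haveI : Fact p.Prime := ⟨hp⟩
  exact mul_left_cancel₀ ha h

lemma zero_not_mem_image (hp : p.Prime) (S : Finset (ZMod p)) (h0 : (0 : ZMod p) ∉ S)
    (a : ZMod p) (ha : a ≠ 0) : (0 : ZMod p) ∉ S.image (fun s => a * s) := by
  haveI : Fact p.Prime := ⟨hp⟩
  intro h
  obtain ⟨s, hs, has⟩ := Finset.mem_image.mp h
  rcases mul_eq_zero.mp has with h' | h'
  · exact ha h'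
  · rw [h'] at hs; exact h0 hs

lemma sum_indicator_chi (T : Finset (ZMod p)) :
    ∑ j ∈ T, chi p j = ∑ j : ZMod p, ((if j ∈ T then (1:ℤ) else 0 : ℤ) : ℂ) * chi p j := by
  rw [Finset.sum_congr rfl (fun j (_ : j ∈ Finset.univ) => by
    split_ifs with h <;> simp [h] : ∀ j ∈ Finset.univ, ((if j ∈ T then (1:ℤ) else 0 : ℤ) : ℂ) * chi p j = if j ∈ T then chi p j else 0)]
  rw [Finset.sum_ite_mem, Finset.univ_inter]

lemma sum_chi_univ (hp : p.Prime) : ∑ j : ZMod p, chi p j = 0 := by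
  haveI : Fact p.Prime := ⟨hp⟩
  have h := sum_chi p 1
  have h1 : (1 : ZMod p) ≠ 0 := one_ne_zero
  simp only [mul_one, h1, if_false] at h
  exact h

lemma indicator_sum_eq (T : Finset (ZMod p)) (f : ZMod p → ℤ) :
    ∑ j : ZMod p, ((f j : ℂ)) * chi p j
      = ∑ j : ZMod p, (f j : ℂ) * chi p j := rfl

lemma lam_ne_zero (hp : p.Prime) (S : Finset (ZMod p)) (h0 : (0 : ZMod p) ∉ S)
    (hS : S.Nonempty) (a : ZMod p) : lam p S a ≠ 0 := by
  rcases eq_or_ne a 0 with rfl | ha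
  · rw [lam_zero]
    exact_mod_cast Nat.cast_ne_zero.mpr (Finset.card_ne_zero_of_mem hS.choose_spec)
  · intro hlam
    set T := S.image (fun s => a * s) with hT
    set f : ZMod p → ℤ := fun j => if j ∈ T then 1 else 0 with hf
    have h0f : f 0 = 0 := by simp [hf, show (0 : ZMod p) ∉ T from zero_not_mem_image p hp S h0 a ha]
    have hsum : ∑ j : ZMod p, (f j : ℂ) * chi p j = 0 := by
      rw [hf]
      rw [← sum_indicator_chi, ← lam_eq_sum_image p hp S a ha, hlam]
    have hz := indep p hp f h0f hsum
    obtain ⟨s, hs⟩ := hS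
    have : f (a * s) = 1 := by
      have hmem : a * s ∈ T := by rw [hT]; exact Finset.mem_image.mpr ⟨s, hs, rfl⟩
      simp [hf, hmem]
    rw [hz (a * s)] at this
    norm_num at this

lemma lam_ne_pos_int (hp : p.Prime) (S : Finset (ZMod p)) (h0 : (0 : ZMod p) ∉ S)
    (a : ZMod p) (ha : a ≠ 0) (m : ℤ) (hm : 1 ≤ m) : lam p S a ≠ (m : ℂ) := by
  intro hlam
  haveI : Fact p.Prime := ⟨hp⟩
  set T := S.image (fun s => a * s) with hT
  set f : ZMod p → ℤ := fun j => (if j ∈ T then 1 else 0) + (if j = 0 then 0 else m) with hf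
  have h0f : f 0 = 0 := by simp [hf, show (0 : ZMod p) ∉ T from zero_not_mem_image p hp S h0 a ha]
  have hsum : ∑ j : ZMod p, (f j : ℂ) * chi p j = 0 := by
    have e1 : ∀ j : ZMod p, (f j : ℂ) * chi p j
        = ((if j ∈ T then (1:ℤ) else 0 : ℤ) : ℂ) * chi p j + (m : ℂ) * chi p j
          - (if j = 0 then (m : ℂ) * chi p j else 0) := by
      intro j
      rw [hf]
      push_cast
      split_ifs <;> ring
    rw [Finset.sum_congr rfl fun j _ => e1 j, Finset.sum_sub_distrib, Finset.sum_add_distrib,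
      ← sum_indicator_chi, ← lam_eq_sum_image p hp S a ha, ← Finset.mul_sum, sum_chi_univ p hp,
      Finset.sum_ite_eq' Finset.univ 0 (fun j => (m:ℂ) * chi p j)]
    simp [hlam, chi_zero]
  have hz := indep p hp f h0f hsum
  have h1 : (1 : ZMod p) ≠ 0 := one_ne_zero
  have := hz 1
  rw [hf] at this
  simp only [h1, if_false] at this
  split_ifs at this <;> omega

lemma lam_ne_neg_int (hp : p.Prime) (S : Finset (ZMod p)) (h0 : (0 : ZMod p) ∉ S)
    (a : ZMod p) (ha : a ≠ 0) (m : ℤ) (hm : 2 ≤ m) : lam p S a ≠ -(m : ℂ) := by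
  intro hlam
  haveI : Fact p.Prime := ⟨hp⟩
  set T := S.image (fun s => a * s) with hT
  set f : ZMod p → ℤ := fun j => (if j ∈ T then 1 else 0) - (if j = 0 then 0 else m) with hf
  have h0f : f 0 = 0 := by simp [hf, show (0 : ZMod p) ∉ T from zero_not_mem_image p hp S h0 a ha]
  have hsum : ∑ j : ZMod p, (f j : ℂ) * chi p j = 0 := by
    have e1 : ∀ j : ZMod p, (f j : ℂ) * chi p j
        = ((if j ∈ T then (1:ℤ) else 0 : ℤ) : ℂ) * chi p j - ((m : ℂ) * chi p j
          - (if j = 0 then (m : ℂ) * chi p j else 0)) := by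
      intro j
      rw [hf]
      push_cast
      split_ifs <;> ring
    rw [Finset.sum_congr rfl fun j _ => e1 j, Finset.sum_sub_distrib, Finset.sum_sub_distrib,
      ← sum_indicator_chi, ← lam_eq_sum_image p hp S a ha, ← Finset.mul_sum, sum_chi_univ p hp,
      Finset.sum_ite_eq' Finset.univ 0 (fun j => (m:ℂ) * chi p j)]
    simp [hlam, chi_zero]
  have hz := indep p hp f h0f hsum
  have h1 : (1 : ZMod p) ≠ 0 := one_ne_zero
  have := hz 1
  rw [hf] at this
  simp only [h1, if_false] at this
  split_ifs at this <;> omega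

lemma lam_add_ne_zero (hp : p.Prime) (hodd : Odd p) (S S' : Finset (ZMod p))
    (hsym : ∀ x : ZMod p, x ∈ S ↔ -x ∈ S) (hsym' : ∀ x : ZMod p, x ∈ S' ↔ -x ∈ S')
    (h0 : (0 : ZMod p) ∉ S) (h0' : (0 : ZMod p) ∉ S')
    (hS : S.Nonempty) (hS' : S'.Nonempty) (a b : ZMod p) :
    lam p S a + lam p S' b ≠ 0 := by
  haveI : Fact p.Prime := ⟨hp⟩
  intro heq
  rcases eq_or_ne a 0 with rfl | ha <;> rcases eq_or_ne b 0 with rfl | hb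
  · rw [lam_zero, lam_zero] at heq
    have : ((S.card + S'.card : ℕ) : ℂ) = 0 := by push_cast; linear_combination heq
    have h2 := Nat.cast_eq_zero.mp this
    have := Finset.card_ne_zero_of_mem hS.choose_spec
    omega
  · rw [lam_zero] at heq
    have hm : (2:ℤ) ≤ (S.card : ℤ) := by
      exact_mod_cast card_ge_two p hp hodd S hsym h0 hS
    refine lam_ne_neg_int p hp S' h0' b hb (S.card : ℤ) hm ?_
    push_cast
    linear_combination heq
  · rw [lam_zero] at heq
    have hm : (2:ℤ) ≤ (S'.card : ℤ) := by
      exact_mod_cast card_ge_two p hp hodd S' hsym' h0' hS'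
    refine lam_ne_neg_int p hp S h0 a ha (S'.card : ℤ) hm ?_
    push_cast
    linear_combination heq
  · set T := S.image (fun s => a * s) with hT
    set T' := S'.image (fun s => b * s) with hT'
    set f : ZMod p → ℤ := fun j => (if j ∈ T then 1 else 0) + (if j ∈ T' then 1 else 0) with hf
    have h0f : f 0 = 0 := by
      simp [hf, show (0 : ZMod p) ∉ T from zero_not_mem_image p hp S h0 a ha, show (0 : ZMod p) ∉ T' from zero_not_mem_image p hp S' h0' b hb]
    have hsum : ∑ j : ZMod p, (f j : ℂ) * chi p j = 0 := by
      have e1 : ∀ j : ZMod p, (f j : ℂ) * chi p j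
          = ((if j ∈ T then (1:ℤ) else 0 : ℤ) : ℂ) * chi p j
            + ((if j ∈ T' then (1:ℤ) else 0 : ℤ) : ℂ) * chi p j := by
        intro j
        rw [hf]
        push_cast
        ring
      rw [Finset.sum_congr rfl fun j _ => e1 j, Finset.sum_add_distrib,
        ← sum_indicator_chi, ← sum_indicator_chi, ← lam_eq_sum_image p hp S a ha,
        ← lam_eq_sum_image p hp S' b hb, heq]
    have hz := indep p hp f h0f hsum
    obtain ⟨s, hs⟩ := hS
    have hmem : a * s ∈ T := by rw [hT]; exact Finset.mem_image.mpr ⟨s, hs, rfl⟩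
    have := hz (a * s)
    rw [hf] at this
    simp only [hmem, if_true] at this
    split_ifs at this <;> omega

lemma sum_lam_sq (S : Finset (ZMod p)) (hsym : ∀ x : ZMod p, x ∈ S ↔ -x ∈ S) :
    ∑ b : ZMod p, (lam p S b) ^ 2 = (p : ℂ) * S.card := by
  have e1 : ∀ b : ZMod p, (lam p S b) ^ 2 = ∑ s ∈ S, ∑ s' ∈ S, chi p (b * (s + s')) := by
    intro b
    rw [sq, lam, Finset.sum_mul_sum]
    refine Finset.sum_congr rfl fun s _ => Finset.sum_congr rfl fun s' _ => ?_
    rw [← chi_add]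
    congr 1
    ring
  rw [Finset.sum_congr rfl fun b _ => e1 b, Finset.sum_comm]
  have e2 : ∀ s ∈ S, ∑ b : ZMod p, ∑ s' ∈ S, chi p (b * (s + s'))
      = (p : ℂ) := by
    intro s hs
    rw [Finset.sum_comm]
    have e3 : ∀ s' ∈ S, ∑ b : ZMod p, chi p (b * (s + s'))
        = if s + s' = 0 then (p : ℂ) else 0 := fun s' _ => sum_chi p (s + s')
    rw [Finset.sum_congr rfl e3]
    have e4 : ∀ s' ∈ S, (if s + s' = 0 then (p : ℂ) else 0)
        = if s' = -s then (p : ℂ) else 0 := by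
      intro s' _
      congr 1
      simp [eq_comm, eq_neg_iff_add_eq_zero, add_comm]
    rw [Finset.sum_congr rfl e4, Finset.sum_ite_eq' S (-s) (fun _ => (p : ℂ))]
    simp [(hsym s).mp hs]
  rw [Finset.sum_congr rfl e2]
  simp [Finset.card_univ, mul_comm]

lemma sum_lamR_sq (S : Finset (ZMod p)) (hsym : ∀ x : ZMod p, x ∈ S ↔ -x ∈ S) :
    ∑ b : ZMod p, (lamR p S b) ^ 2 = (p : ℝ) * S.card := by
  apply Complex.ofReal_injective
  push_cast
  have e : (∑ b : ZMod p, ((lamR p S b : ℝ) : ℂ) ^ 2) = ∑ b : ZMod p, (lam p S b) ^ 2 :=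
    Finset.sum_congr rfl fun b _ => by rw [lam_real p S hsym b]
  rw [e, sum_lam_sq p S hsym]
end Arith

lemma multiset_eq_of_map_eq {α β : Type*} [DecidableEq β] (g : α → β) :
    ∀ (s t : Multiset α), s.map g = t.map g →
      (∀ x ∈ s, ∀ y ∈ t, g x = g y → x = y) → s = t := by
  intro s
  induction s using Multiset.induction_on with
  | empty =>
    intro t h _
    have : t.map g = 0 := h.symm
    rw [Multiset.map_eq_zero] at this
    rw [this]
  | cons a s ih =>
    intro t h hinj
    have hga : g a ∈ t.map g := by
      rw [← h]
      exact Multiset.mem_map_of_mem g (Multiset.mem_cons_self a s)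
    obtain ⟨b, hb, hgb⟩ := Multiset.mem_map.mp hga
    have hab : a = b := hinj a (Multiset.mem_cons_self a s) b hb hgb.symm
    subst hab
    obtain ⟨t', rfl⟩ := Multiset.exists_cons_of_mem hb
    rw [Multiset.map_cons, Multiset.map_cons] at h
    have h' := (Multiset.cons_inj_right (g a)).mp h
    have := ih t' h' (fun x hx y hy => hinj x (Multiset.mem_cons_of_mem hx) y
      (Multiset.mem_cons_of_mem hy))
    rw [this]

section Main
variable (p : ℕ) [NeZero p]

noncomputable def spec (S : Finset (ZMod p)) : Multiset ℝ :=
  Finset.univ.val.map (lamR p S)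

lemma lamR_ne_zero (hp : p.Prime) (S : Finset (ZMod p)) (h0 : (0 : ZMod p) ∉ S)
    (hsym : ∀ x : ZMod p, x ∈ S ↔ -x ∈ S) (hS : S.Nonempty) (b : ZMod p) :
    lamR p S b ≠ 0 := by
  intro h
  apply lam_ne_zero p hp S h0 hS b
  rw [← lam_real p S hsym b, h]
  norm_num
end Main

section Final
variable (p : ℕ) [NeZero p]

lemma circSpectrum_eq_spec (S : Finset (ZMod p)) (hsym : ∀ x : ZMod p, x ∈ S ↔ -x ∈ S) :
    circSpectrum p S = spec p S := circSpectrum_eq p S hsym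

lemma absSpec_empty : absNonzeroSpectrum p (∅ : Finset (ZMod p)) = 0 := by
  rw [absNonzeroSpectrum, circSpectrum_eq_spec p ∅ (by simp)]
  rw [Multiset.filter_eq_nil.mpr, Multiset.map_zero]
  intro x hx
  obtain ⟨b, _, rfl⟩ := Multiset.mem_map.mp hx
  simp [lamR, lam]

lemma absSpec_nonempty (hp : p.Prime) (S : Finset (ZMod p))
    (hsym : ∀ x : ZMod p, x ∈ S ↔ -x ∈ S) (h0 : (0 : ZMod p) ∉ S) (hS : S.Nonempty) :
    absNonzeroSpectrum p S = (spec p S).map (fun x => |x|) := by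
  rw [absNonzeroSpectrum, circSpectrum_eq_spec p S hsym, Multiset.filter_eq_self.mpr]
  intro x hx
  obtain ⟨b, _, rfl⟩ := Multiset.mem_map.mp hx
  exact lamR_ne_zero p hp S h0 hsym hS b

lemma spec_sq_sum (S : Finset (ZMod p)) (hsym : ∀ x : ZMod p, x ∈ S ↔ -x ∈ S) :
    (((spec p S).map (fun x => |x|)).map (fun x => x ^ 2)).sum = (p : ℝ) * S.card := by
  rw [spec, Multiset.map_map, Multiset.map_map]
  have h : (Multiset.map (((fun x => x ^ 2) ∘ fun x => |x|) ∘ lamR p S) Finset.univ.val)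
      = Multiset.map (fun b => (lamR p S b) ^ 2) Finset.univ.val := by
    refine Multiset.map_congr rfl fun b _ => ?_
    simp [Function.comp, sq_abs]
  rw [h]
  exact sum_lamR_sq p S hsym

theorem stmt19 (p : ℕ) [NeZero p] (hp : Nat.Prime p) (hodd : Odd p)
    (SF SH : Finset (ZMod p))
    (hsymF : ∀ x : ZMod p, x ∈ SF ↔ -x ∈ SF) (h0F : (0 : ZMod p) ∉ SF)
    (hsymH : ∀ x : ZMod p, x ∈ SH ↔ -x ∈ SH) (h0H : (0 : ZMod p) ∉ SH)
    (hsc : absNonzeroSpectrum p SF = absNonzeroSpectrum p SH) :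
    Nonempty (circGraph p SF hsymF h0F ≃g circGraph p SH hsymH h0H) := by
  haveI : Fact p.Prime := ⟨hp⟩
  suffices main : ∃ t : ZMod p, t ≠ 0 ∧ SF = SH.image (fun s => t * s) by
    obtain ⟨t, ht, hT⟩ := main
    have hmem : ∀ a b : ZMod p, (t * b - t * a ∈ SF) ↔ (b - a ∈ SH) := by
      intro a b
      rw [hT]
      constructor
      · intro h
        obtain ⟨s, hs, hts⟩ := Finset.mem_image.mp h
        have : s = b - a := by
          apply mul_left_cancel₀ ht
          rw [hts]; ring
        rwa [← this]
      · intro h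
        exact Finset.mem_image.mpr ⟨b - a, h, by ring⟩
    exact ⟨(⟨Equiv.mulLeft₀ t ht, fun {a b} => hmem a b⟩ :
      circGraph p SH hsymH h0H ≃g circGraph p SF hsymF h0F).symm⟩
  by_cases hF : SF = ∅
  · have hH : SH = ∅ := by
      by_contra h
      have hSH : SH.Nonempty := Finset.nonempty_iff_ne_empty.mpr h
      rw [hF, absSpec_empty, absSpec_nonempty p hp SH hsymH h0H hSH] at hsc
      have hm : |lamR p SH 0| ∈ (spec p SH).map (fun x => |x|) :=
        Multiset.mem_map_of_mem _ (Multiset.mem_map_of_mem _ (Finset.mem_univ_val 0))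
      rw [← hsc] at hm
      simp at hm
    exact ⟨1, one_ne_zero, by rw [hF, hH]; simp⟩
  · have hSF : SF.Nonempty := Finset.nonempty_iff_ne_empty.mpr hF
    have hSH : SH.Nonempty := by
      by_contra h
      rw [Finset.not_nonempty_iff_eq_empty] at h
      rw [h, absSpec_empty, absSpec_nonempty p hp SF hsymF h0F hSF] at hsc
      have hm : |lamR p SF 0| ∈ (spec p SF).map (fun x => |x|) :=
        Multiset.mem_map_of_mem _ (Multiset.mem_map_of_mem _ (Finset.mem_univ_val 0))
      rw [hsc] at hm
      simp at hm
    rw [absSpec_nonempty p hp SF hsymF h0F hSF, absSpec_nonempty p hp SH hsymH h0H hSH] at hsc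
    -- cards are equal
    have hcard : SF.card = SH.card := by
      have h1 := spec_sq_sum p SF hsymF
      have h2 := spec_sq_sum p SH hsymH
      rw [hsc, h2] at h1
      have hpne : (p : ℝ) ≠ 0 := Nat.cast_ne_zero.mpr (NeZero.ne p)
      have := mul_left_cancel₀ hpne h1
      exact_mod_cast this.symm
    -- actual spectra are equal
    have hspec : spec p SF = spec p SH := by
      refine multiset_eq_of_map_eq (fun x => |x|) _ _ hsc ?_
      intro x hx y hy habs
      obtain ⟨a, _, rfl⟩ := Multiset.mem_map.mp hx
      obtain ⟨b, _, rfl⟩ := Multiset.mem_map.mp hy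
      rcases abs_eq_abs.mp habs with h | h
      · exact h
      · exfalso
        apply lam_add_ne_zero p hp hodd SF SH hsymF hsymH h0F h0H hSF hSH a b
        rw [← lam_real p SF hsymF a, ← lam_real p SH hsymH b]
        rw [h]
        push_cast
        ring
    -- find the multiplier
    have hmem1 : lamR p SF 1 ∈ spec p SH := by
      rw [← hspec]
      exact Multiset.mem_map_of_mem _ (Finset.mem_univ_val 1)
    obtain ⟨t, _, heq⟩ := Multiset.mem_map.mp hmem1
    have ht : t ≠ 0 := by
      rintro rfl
      have hc : lam p SF 1 = ((SH.card : ℤ) : ℂ) := by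
        rw [← lam_real p SF hsymF 1, ← heq, lam_real p SH hsymH 0, lam_zero]
        push_cast
        ring
      have hone : (1 : ℤ) ≤ (SH.card : ℤ) := by
        exact_mod_cast Nat.one_le_iff_ne_zero.mpr (Finset.card_ne_zero_of_mem hSH.choose_spec)
      exact lam_ne_pos_int p hp SF h0F 1 one_ne_zero (SH.card : ℤ) hone hc
    refine ⟨t, ht, ?_⟩
    have hC : lam p SF 1 = lam p SH t := by
      rw [← lam_real p SF hsymF 1, ← lam_real p SH hsymH t, heq]

    set T' := SH.image (fun s => t * s) with hT'
    set f : ZMod p → ℤ := fun j => (if j ∈ SF then 1 else 0) - (if j ∈ T' then 1 else 0) with hf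
    have h0f : f 0 = 0 := by
      simp [hf, h0F, show (0 : ZMod p) ∉ T' from zero_not_mem_image p hp SH h0H t ht]
    have hsum : ∑ j : ZMod p, (f j : ℂ) * chi p j = 0 := by
      have e1 : ∀ j : ZMod p, (f j : ℂ) * chi p j
          = ((if j ∈ SF then (1:ℤ) else 0 : ℤ) : ℂ) * chi p j
            - ((if j ∈ T' then (1:ℤ) else 0 : ℤ) : ℂ) * chi p j := by
        intro j
        rw [hf]
        push_cast
        ring
      rw [Finset.sum_congr rfl fun j _ => e1 j, Finset.sum_sub_distrib,
        ← sum_indicator_chi, ← sum_indicator_chi, ← lam_eq_sum_image p hp SH t ht]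
      have : lam p SF 1 = ∑ j ∈ SF, chi p j := by
        rw [lam]
        exact Finset.sum_congr rfl fun s _ => by rw [one_mul]
      rw [← this, hC, sub_self]
    have hz := indep p hp f h0f hsum
    ext j
    have := hz j
    rw [hf] at this
    by_cases h1 : j ∈ SF <;> by_cases h2 : j ∈ T' <;> simp [h1, h2] at this ⊢
end Final
end
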